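/- arXiv:1406.2987 — 2 statements merged into one kernel-verified Lean document; each statement's English description precedes it below -/
import Mathlib

section
/- Let A be a commutative Hopf ℂ-algebra and J a Hopf 2-cocycle for A. If φ ∈ A is central in the twisted algebra A_J, then J(φ ⊗ ψ) = J(ψ ⊗ φ) for every ψ ∈ A; moreover, in that case R^J(ψ ⊗ φ) = ε(ψ)ε(φ) for every ψ ∈ A, so in particular R^J(ψ ⊗ φ) = 0 whenever ε(φ) = 0 or ε(ψ) = 0. -/
open TensorProduct

noncomputable section

namespace Twisting

/-- Convolution product of linear functionals on a coalgebra. -/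
def conv {C : Type*} [AddCommMonoid C] [Module ℂ C] [CoalgebraStruct ℂ C]
    (F G : C →ₗ[ℂ] ℂ) : C →ₗ[ℂ] ℂ :=
  LinearMap.mul' ℂ ℂ ∘ₗ TensorProduct.map F G ∘ₗ Coalgebra.comul

variable (A : Type*) [CommRing A] [HopfAlgebra ℂ A]

/-- A Hopf 2-cocycle for the Hopf algebra `A`:  a convolution-invertible linear functional
`J` on `A ⊗ A` satisfying the 2-cocycle identity
`Σ J(a₁b₁ ⊗ c) J(a₂ ⊗ b₂) = Σ J(a ⊗ b₁c₁) J(b₂ ⊗ c₂)` (expressed below as an equality of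
linear functionals on `(A ⊗ A) ⊗ A`) and the normalization `J(a ⊗ 1) = ε(a) = J(1 ⊗ a)`. -/
structure Hopf2Cocycle where
  J : A ⊗[ℂ] A →ₗ[ℂ] ℂ
  Jinv : A ⊗[ℂ] A →ₗ[ℂ] ℂ
  conv_right_inv : conv J Jinv = Coalgebra.counit
  conv_left_inv : conv Jinv J = Coalgebra.counit
  cocycle : conv (J ∘ₗ TensorProduct.map (LinearMap.mul' ℂ A) LinearMap.id)
        (LinearMap.mul' ℂ ℂ ∘ₗ TensorProduct.map J Coalgebra.counit)
      = conv (J ∘ₗ TensorProduct.map LinearMap.id (LinearMap.mul' ℂ A)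
            ∘ₗ (TensorProduct.assoc ℂ A A A).toLinearMap)
        (LinearMap.mul' ℂ ℂ ∘ₗ TensorProduct.map Coalgebra.counit J
            ∘ₗ (TensorProduct.assoc ℂ A A A).toLinearMap)
  norm_right : ∀ a : A, J (a ⊗ₜ[ℂ] 1) = Coalgebra.counit a
  norm_left : ∀ a : A, J ((1 : A) ⊗ₜ[ℂ] a) = Coalgebra.counit a

variable {A}

namespace Hopf2Cocycle

/-- The cotriangular form `R^J (a ⊗ b) = Σ J⁻¹(b₁ ⊗ a₁) J(a₂ ⊗ b₂)`. -/
def RJ (c : Hopf2Cocycle A) : A ⊗[ℂ] A →ₗ[ℂ] ℂ :=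
  conv (c.Jinv ∘ₗ (TensorProduct.comm ℂ A A).toLinearMap) c.J

/-- `J` is minimal if `R^J` is nondegenerate. -/
def Minimal (c : Hopf2Cocycle A) : Prop :=
  ∀ a : A, (∀ b : A, c.RJ (a ⊗ₜ[ℂ] b) = 0) → a = 0

/-- The multiplication `a ·_J b = Σ a₁b₁ J(a₂ ⊗ b₂)` of the twisted algebra `A_J`. -/
def mulJ (c : Hopf2Cocycle A) : A ⊗[ℂ] A →ₗ[ℂ] A :=
  (TensorProduct.rid ℂ A).toLinearMap
    ∘ₗ TensorProduct.map (LinearMap.mul' ℂ A) c.J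
    ∘ₗ Coalgebra.comul

end Hopf2Cocycle

/-- Gauge equivalence of Hopf 2-cocycles, at the level of the underlying bilinear forms:
`J'(a ⊗ b) = Σ x(a₁) x(b₁) J(a₂ ⊗ b₂) x⁻¹(a₃b₃)` for some convolution-invertible
linear functional `x` with `x(1) = 1`. -/
def GaugeEquiv (J J' : A ⊗[ℂ] A →ₗ[ℂ] ℂ) : Prop :=
  ∃ x xinv : A →ₗ[ℂ] ℂ,
    conv x xinv = Coalgebra.counit ∧ conv xinv x = Coalgebra.counit ∧
    x 1 = 1 ∧
    J' = conv (LinearMap.mul' ℂ ℂ ∘ₗ TensorProduct.map x x)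
           (conv J (xinv ∘ₗ LinearMap.mul' ℂ A))

/-- A realization of the twisted algebra `A_J` as an honest (possibly noncommutative)
`ℂ`-algebra `B`: a linear isomorphism matching the twisted multiplication `·_J` with the
multiplication of `B` and preserving units. -/
structure TwistedModel (c : Hopf2Cocycle A) (B : Type*) [Ring B] [Algebra ℂ B] where
  e : A ≃ₗ[ℂ] B
  map_one : e 1 = 1
  map_mul : ∀ a b : A, e (c.mulJ (a ⊗ₜ[ℂ] b)) = e a * e b



section Statement7Aux

set_option synthInstance.maxHeartbeats 800000

open Coalgebra LinearMap

variable {A : Type*} [CommRing A] [HopfAlgebra ℂ A]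

/-- The shuffle `(A⊗A)⊗(A⊗A) → (A⊗A)⊗(A⊗A)`, `(a⊗b)⊗(c⊗d) ↦ (a⊗c)⊗(b⊗d)`. -/
def ttcL : (A ⊗[ℂ] A) ⊗[ℂ] (A ⊗[ℂ] A) →ₗ[ℂ] (A ⊗[ℂ] A) ⊗[ℂ] (A ⊗[ℂ] A) :=
  (TensorProduct.tensorTensorTensorComm ℂ A A A A).toLinearMap

/-- `mulAux c (x ⊗ y) = Σ x₁y₁ J(x₂⊗y₂)` for `x, y : A ⊗ A` viewed as pairs of legs. -/
def mulAux (c : Hopf2Cocycle A) : (A ⊗[ℂ] A) ⊗[ℂ] (A ⊗[ℂ] A) →ₗ[ℂ] A :=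
  (TensorProduct.rid ℂ A).toLinearMap ∘ₗ TensorProduct.map (LinearMap.mul' ℂ A) c.J ∘ₗ ttcL

lemma mulJ_eq (c : Hopf2Cocycle A) :
    c.mulJ = mulAux c ∘ₗ TensorProduct.map Coalgebra.comul Coalgebra.comul := rfl

lemma mulJ_tmul (c : Hopf2Cocycle A) (a b : A) :
    c.mulJ (a ⊗ₜ[ℂ] b) = mulAux c (Coalgebra.comul a ⊗ₜ[ℂ] Coalgebra.comul b) := by
  rw [mulJ_eq]; simp

lemma mulAux_repr (c : Hopf2Cocycle A) {a b : A}
    (ra : Coalgebra.Repr ℂ a (A × A)) (rb : Coalgebra.Repr ℂ b (A × A)) :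
    mulAux c (Coalgebra.comul a ⊗ₜ[ℂ] Coalgebra.comul b) =
      ∑ i ∈ ra.index, ∑ j ∈ rb.index,
        c.J (ra.right i ⊗ₜ[ℂ] rb.right j) • (ra.left i * rb.left j) := by
  rw [← ra.eq, ← rb.eq]
  simp [mulAux, ttcL, TensorProduct.sum_tmul, TensorProduct.tmul_sum, map_sum]
  exact Finset.sum_comm

lemma conv_repr (F G : A ⊗[ℂ] A →ₗ[ℂ] ℂ) {a b : A}
    (ra : Coalgebra.Repr ℂ a (A × A)) (rb : Coalgebra.Repr ℂ b (A × A)) :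
    conv F G (a ⊗ₜ[ℂ] b) =
      ∑ i ∈ ra.index, ∑ j ∈ rb.index,
        F (ra.left i ⊗ₜ[ℂ] rb.left j) * G (ra.right i ⊗ₜ[ℂ] rb.right j) := by
  simp only [conv, LinearMap.comp_apply, TensorProduct.comul_tmul,
    TensorProduct.map_tmul]
  rw [← ra.eq, ← rb.eq]
  simp [TensorProduct.sum_tmul, TensorProduct.tmul_sum, map_sum]
  exact Finset.sum_comm

lemma sum_counit_smul {a : A} (ra : Coalgebra.Repr ℂ a (A × A)) :
    ∑ i ∈ ra.index, (Coalgebra.counit (R := ℂ) (ra.left i)) • ra.right i = a := by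
  have h := Coalgebra.sum_counit_tmul_eq (R := ℂ) ra
  have h2 := congrArg (TensorProduct.lid ℂ A) h
  rw [map_sum] at h2
  simpa only [TensorProduct.lid_tmul, one_smul] using h2

lemma counit_mulJ (c : Hopf2Cocycle A) (a b : A) :
    Coalgebra.counit (R := ℂ) (c.mulJ (a ⊗ₜ[ℂ] b)) = c.J (a ⊗ₜ[ℂ] b) := by
  have ra := Coalgebra.Repr.arbitrary ℂ a
  have rb := Coalgebra.Repr.arbitrary ℂ b
  rw [mulJ_tmul, mulAux_repr c ra rb]
  conv_rhs => rw [← sum_counit_smul ra, ← sum_counit_smul rb]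
  rw [TensorProduct.sum_tmul, map_sum, map_sum]
  refine Finset.sum_congr rfl fun i _ => ?_
  rw [TensorProduct.tmul_sum, map_sum, map_sum]
  refine Finset.sum_congr rfl fun j _ => ?_
  simp only [map_smul, Bialgebra.counit_mul, TensorProduct.smul_tmul, TensorProduct.tmul_smul,
    map_smul, smul_eq_mul]
  ring

/-- `Lhat c (((x₁⊗x₂)⊗x₃) ⊗ ((y₁⊗y₂)⊗y₃)) = J(x₃⊗y₃) • ((x₁⊗x₂)*(y₁⊗y₂))`. -/
def Lhat (c : Hopf2Cocycle A) :
    ((A ⊗[ℂ] A) ⊗[ℂ] A) ⊗[ℂ] ((A ⊗[ℂ] A) ⊗[ℂ] A) →ₗ[ℂ] A ⊗[ℂ] A :=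
  (TensorProduct.rid ℂ (A ⊗[ℂ] A)).toLinearMap
    ∘ₗ TensorProduct.map (LinearMap.mul' ℂ (A ⊗[ℂ] A)) c.J
    ∘ₗ (TensorProduct.tensorTensorTensorComm ℂ (A ⊗[ℂ] A) A (A ⊗[ℂ] A) A).toLinearMap

/-- `Rhat c ((x₁⊗(x₂⊗x₃)) ⊗ (y₁⊗(y₂⊗y₃))) = (x₁*y₁) ⊗ mulAux((x₂⊗x₃)⊗(y₂⊗y₃))`. -/
def Rhat (c : Hopf2Cocycle A) :
    (A ⊗[ℂ] (A ⊗[ℂ] A)) ⊗[ℂ] (A ⊗[ℂ] (A ⊗[ℂ] A)) →ₗ[ℂ] A ⊗[ℂ] A :=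
  TensorProduct.map (LinearMap.mul' ℂ A) (mulAux c)
    ∘ₗ (TensorProduct.tensorTensorTensorComm ℂ A (A ⊗[ℂ] A) A (A ⊗[ℂ] A)).toLinearMap

lemma claim1 (c : Hopf2Cocycle A) :
    Coalgebra.comul ∘ₗ mulAux c =
      Lhat c ∘ₗ TensorProduct.map
        (LinearMap.rTensor A (Coalgebra.comul (R := ℂ)))
        (LinearMap.rTensor A (Coalgebra.comul (R := ℂ))) := by
  apply TensorProduct.ext_fourfold'
  intro w x y z
  simp [mulAux, ttcL, Lhat, Bialgebra.comul_mul]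

lemma claim2 (c : Hopf2Cocycle A) :
    TensorProduct.map (LinearMap.mul' ℂ A) c.mulJ ∘ₗ ttcL =
      Rhat c ∘ₗ TensorProduct.map
        (LinearMap.lTensor A (Coalgebra.comul (R := ℂ)))
        (LinearMap.lTensor A (Coalgebra.comul (R := ℂ))) := by
  apply TensorProduct.ext_fourfold'
  intro w x y z
  simp [ttcL, Rhat, mulJ_tmul]

lemma claim3 (c : Hopf2Cocycle A) :
    Lhat c = Rhat c ∘ₗ TensorProduct.map
      (TensorProduct.assoc ℂ A A A).toLinearMap
      (TensorProduct.assoc ℂ A A A).toLinearMap := by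
  apply TensorProduct.ext_fourfold'
  intro w x y z
  induction w using TensorProduct.induction_on with
  | zero => simp only [TensorProduct.zero_tmul, LinearMap.map_zero]
  | add u v hu hv => simp only [TensorProduct.add_tmul, LinearMap.map_add, hu, hv]
  | tmul w1 w2 =>
    induction y using TensorProduct.induction_on with
    | zero =>
      simp only [TensorProduct.zero_tmul, TensorProduct.tmul_zero, LinearMap.map_zero]
    | add u v hu hv =>
      simp only [TensorProduct.add_tmul, TensorProduct.tmul_add, LinearMap.map_add, hu, hv]
    | tmul y1 y2 =>
      simp [Lhat, Rhat, mulAux, ttcL, TensorProduct.smul_tmul, Algebra.TensorProduct.tmul_mul_tmul]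

lemma comul_mulJ (c : Hopf2Cocycle A) :
    Coalgebra.comul ∘ₗ c.mulJ =
      TensorProduct.map (LinearMap.mul' ℂ A) c.mulJ ∘ₗ ttcL
        ∘ₗ TensorProduct.map (Coalgebra.comul (R := ℂ)) (Coalgebra.comul (R := ℂ)) := by
  conv_lhs => rw [mulJ_eq]
  calc Coalgebra.comul ∘ₗ mulAux c ∘ₗ TensorProduct.map Coalgebra.comul Coalgebra.comul
      = (Coalgebra.comul ∘ₗ mulAux c) ∘ₗ TensorProduct.map Coalgebra.comul Coalgebra.comul := rfl
    _ = (Lhat c ∘ₗ TensorProduct.map (LinearMap.rTensor A Coalgebra.comul)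
          (LinearMap.rTensor A Coalgebra.comul))
          ∘ₗ TensorProduct.map Coalgebra.comul Coalgebra.comul := by rw [claim1]
    _ = Lhat c ∘ₗ TensorProduct.map
          (LinearMap.rTensor A Coalgebra.comul ∘ₗ Coalgebra.comul)
          (LinearMap.rTensor A Coalgebra.comul ∘ₗ Coalgebra.comul) := by
        rw [TensorProduct.map_comp]; rfl
    _ = Rhat c ∘ₗ TensorProduct.map
          ((TensorProduct.assoc ℂ A A A).toLinearMap ∘ₗ
            LinearMap.rTensor A Coalgebra.comul ∘ₗ Coalgebra.comul)
          ((TensorProduct.assoc ℂ A A A).toLinearMap ∘ₗ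
            LinearMap.rTensor A Coalgebra.comul ∘ₗ Coalgebra.comul) := by
        rw [claim3, TensorProduct.map_comp (TensorProduct.assoc ℂ A A A).toLinearMap
          (TensorProduct.assoc ℂ A A A).toLinearMap
          (LinearMap.rTensor A Coalgebra.comul ∘ₗ Coalgebra.comul)
          (LinearMap.rTensor A Coalgebra.comul ∘ₗ Coalgebra.comul),
          ← LinearMap.comp_assoc]
    _ = Rhat c ∘ₗ TensorProduct.map
          (LinearMap.lTensor A Coalgebra.comul ∘ₗ Coalgebra.comul)
          (LinearMap.lTensor A Coalgebra.comul ∘ₗ Coalgebra.comul) := by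
        rw [Coalgebra.coassoc]
    _ = (Rhat c ∘ₗ TensorProduct.map (LinearMap.lTensor A Coalgebra.comul)
          (LinearMap.lTensor A Coalgebra.comul))
          ∘ₗ TensorProduct.map Coalgebra.comul Coalgebra.comul := by
        rw [TensorProduct.map_comp]; rfl
    _ = (TensorProduct.map (LinearMap.mul' ℂ A) c.mulJ ∘ₗ ttcL)
          ∘ₗ TensorProduct.map Coalgebra.comul Coalgebra.comul := by rw [← claim2]
    _ = TensorProduct.map (LinearMap.mul' ℂ A) c.mulJ ∘ₗ ttcL
          ∘ₗ TensorProduct.map Coalgebra.comul Coalgebra.comul := rfl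

/-- The "Galois" map `b ↦ Σ S(b₁)b₂ ⊗ b₃`. -/
def galmap : A →ₗ[ℂ] A ⊗[ℂ] A :=
  LinearMap.rTensor A (LinearMap.mul' ℂ A)
    ∘ₗ (TensorProduct.assoc ℂ A A A).symm.toLinearMap
    ∘ₗ TensorProduct.map (HopfAlgebra.antipode ℂ) Coalgebra.comul
    ∘ₗ Coalgebra.comul

lemma gal : galmap (A := A) = TensorProduct.mk ℂ A A 1 := by
  have e1 : TensorProduct.map (HopfAlgebra.antipode (R := ℂ) (A := A)) Coalgebra.comul =
      LinearMap.rTensor (A ⊗[ℂ] A) (HopfAlgebra.antipode ℂ) ∘ₗ LinearMap.lTensor A Coalgebra.comul :=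
    (LinearMap.rTensor_comp_lTensor _ _ _).symm
  have e3 : (TensorProduct.assoc ℂ A A A).symm.toLinearMap
        ∘ₗ LinearMap.rTensor (A ⊗[ℂ] A) (HopfAlgebra.antipode (R := ℂ))
        ∘ₗ (TensorProduct.assoc ℂ A A A).toLinearMap
      = LinearMap.rTensor A (LinearMap.rTensor A (HopfAlgebra.antipode ℂ)) := by
    apply TensorProduct.ext_threefold
    intro x y z
    simp
  calc galmap (A := A)
      = LinearMap.rTensor A (LinearMap.mul' ℂ A)
          ∘ₗ (TensorProduct.assoc ℂ A A A).symm.toLinearMap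
          ∘ₗ LinearMap.rTensor (A ⊗[ℂ] A) (HopfAlgebra.antipode ℂ)
          ∘ₗ (LinearMap.lTensor A Coalgebra.comul ∘ₗ Coalgebra.comul) := by
        rw [galmap, e1]; rfl
    _ = LinearMap.rTensor A (LinearMap.mul' ℂ A)
          ∘ₗ ((TensorProduct.assoc ℂ A A A).symm.toLinearMap
            ∘ₗ LinearMap.rTensor (A ⊗[ℂ] A) (HopfAlgebra.antipode ℂ)
            ∘ₗ (TensorProduct.assoc ℂ A A A).toLinearMap)
          ∘ₗ LinearMap.rTensor A Coalgebra.comul ∘ₗ Coalgebra.comul := by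
        rw [← Coalgebra.coassoc]; rfl
    _ = LinearMap.rTensor A (LinearMap.mul' ℂ A)
          ∘ₗ LinearMap.rTensor A (LinearMap.rTensor A (HopfAlgebra.antipode ℂ))
          ∘ₗ LinearMap.rTensor A Coalgebra.comul ∘ₗ Coalgebra.comul := by rw [e3]
    _ = LinearMap.rTensor A (LinearMap.mul' ℂ A
          ∘ₗ LinearMap.rTensor A (HopfAlgebra.antipode ℂ) ∘ₗ Coalgebra.comul)
          ∘ₗ Coalgebra.comul := by
        rw [LinearMap.rTensor_comp, LinearMap.rTensor_comp]; rfl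
    _ = LinearMap.rTensor A (Algebra.linearMap ℂ A ∘ₗ Coalgebra.counit)
          ∘ₗ Coalgebra.comul := by rw [HopfAlgebra.mul_antipode_rTensor_comul]
    _ = LinearMap.rTensor A (Algebra.linearMap ℂ A)
          ∘ₗ (LinearMap.rTensor A Coalgebra.counit ∘ₗ Coalgebra.comul) := by
        rw [LinearMap.rTensor_comp]; rfl
    _ = LinearMap.rTensor A (Algebra.linearMap ℂ A)
          ∘ₗ (TensorProduct.mk ℂ ℂ A) 1 := by rw [Coalgebra.rTensor_counit_comp_comul]
    _ = TensorProduct.mk ℂ A A 1 := by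
        apply LinearMap.ext; intro a
        simp [Algebra.TensorProduct.algebraMap_apply]

/-- `Dt c (a ⊗ b) = a ·_J b - b ·_J a`. -/
def Dt (c : Hopf2Cocycle A) : A ⊗[ℂ] A →ₗ[ℂ] A :=
  c.mulJ - c.mulJ ∘ₗ (TensorProduct.comm ℂ A A).toLinearMap

lemma S1 (c : Hopf2Cocycle A) :
    TensorProduct.map (LinearMap.mul' ℂ A) c.mulJ ∘ₗ ttcL
        ∘ₗ (TensorProduct.comm ℂ (A ⊗[ℂ] A) (A ⊗[ℂ] A)).toLinearMap
      = TensorProduct.map (LinearMap.mul' ℂ A)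
          (c.mulJ ∘ₗ (TensorProduct.comm ℂ A A).toLinearMap) ∘ₗ ttcL := by
  apply TensorProduct.ext_fourfold'
  intro w x y z
  simp [ttcL, mul_comm]

lemma starD (c : Hopf2Cocycle A) (φ : A)
    (hφ : ∀ ψ : A, c.mulJ (φ ⊗ₜ[ℂ] ψ) = c.mulJ (ψ ⊗ₜ[ℂ] φ)) (t : A) :
    TensorProduct.map (LinearMap.mul' ℂ A) (Dt c)
      (ttcL (Coalgebra.comul φ ⊗ₜ[ℂ] Coalgebra.comul t)) = 0 := by
  have h1 : TensorProduct.map (LinearMap.mul' ℂ A) c.mulJ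
        (ttcL (Coalgebra.comul φ ⊗ₜ[ℂ] Coalgebra.comul t))
      = TensorProduct.map (LinearMap.mul' ℂ A) c.mulJ
        (ttcL (Coalgebra.comul t ⊗ₜ[ℂ] Coalgebra.comul φ)) := by
    have l := LinearMap.congr_fun (comul_mulJ c) (φ ⊗ₜ[ℂ] t)
    have r := LinearMap.congr_fun (comul_mulJ c) (t ⊗ₜ[ℂ] φ)
    simp only [LinearMap.comp_apply, TensorProduct.map_tmul] at l r
    rw [← l, ← r, hφ t]
  have h2 : TensorProduct.map (LinearMap.mul' ℂ A) c.mulJ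
        (ttcL (Coalgebra.comul t ⊗ₜ[ℂ] Coalgebra.comul φ))
      = TensorProduct.map (LinearMap.mul' ℂ A)
          (c.mulJ ∘ₗ (TensorProduct.comm ℂ A A).toLinearMap)
          (ttcL (Coalgebra.comul φ ⊗ₜ[ℂ] Coalgebra.comul t)) := by
    have := LinearMap.congr_fun (S1 c) (Coalgebra.comul φ ⊗ₜ[ℂ] Coalgebra.comul t)
    simpa using this
  have h3 : TensorProduct.map (LinearMap.mul' ℂ A) (Dt c)
      = TensorProduct.map (LinearMap.mul' ℂ A) c.mulJ
        - TensorProduct.map (LinearMap.mul' ℂ A)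
            (c.mulJ ∘ₗ (TensorProduct.comm ℂ A A).toLinearMap) := by
    apply TensorProduct.ext_fourfold'
    intro w x y z
    simp [Dt, TensorProduct.tmul_sub]
  rw [h3, LinearMap.sub_apply, h1, h2, sub_self]

/-- `Phi c φ x = Σ (map mul' (Dt c)) (ttc (comul φ ⊗ x))`. -/
def Phi (c : Hopf2Cocycle A) (φ : A) : A ⊗[ℂ] A →ₗ[ℂ] A ⊗[ℂ] A :=
  TensorProduct.map (LinearMap.mul' ℂ A) (Dt c) ∘ₗ ttcL
    ∘ₗ TensorProduct.mk ℂ (A ⊗[ℂ] A) (A ⊗[ℂ] A) (Coalgebra.comul φ)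

lemma Phi_comul (c : Hopf2Cocycle A) (φ : A)
    (hφ : ∀ ψ : A, c.mulJ (φ ⊗ₜ[ℂ] ψ) = c.mulJ (ψ ⊗ₜ[ℂ] φ)) (t : A) :
    Phi c φ (Coalgebra.comul t) = 0 := by
  simpa [Phi] using starD c φ hφ t

lemma Phi_mul (c : Hopf2Cocycle A) (φ : A) (s : A) (w : A ⊗[ℂ] A) :
    Phi c φ (LinearMap.rTensor A (LinearMap.mul' ℂ A)
        ((TensorProduct.assoc ℂ A A A).symm (s ⊗ₜ[ℂ] w)))
      = LinearMap.rTensor A (LinearMap.mulLeft ℂ s) (Phi c φ w) := by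
  induction w using TensorProduct.induction_on with
  | zero => simp only [TensorProduct.tmul_zero, LinearMap.map_zero, map_zero]
  | add u v hu hv => simp only [TensorProduct.tmul_add, LinearMap.map_add, map_add, hu, hv]
  | tmul w1 w2 =>
    have r := Coalgebra.Repr.arbitrary ℂ φ
    simp only [TensorProduct.assoc_symm_tmul, LinearMap.rTensor_tmul, LinearMap.mul'_apply]
    simp only [Phi, LinearMap.comp_apply, TensorProduct.mk_apply]
    rw [← r.eq]
    simp only [TensorProduct.sum_tmul, map_sum, ttcL,
      LinearEquiv.coe_coe, TensorProduct.tensorTensorTensorComm_tmul,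
      TensorProduct.map_tmul, LinearMap.mul'_apply, LinearMap.rTensor_tmul,
      LinearMap.mulLeft_apply]
    refine Finset.sum_congr rfl fun i _ => ?_
    rw [mul_left_comm]

lemma key (c : Hopf2Cocycle A) (φ : A)
    (hφ : ∀ ψ : A, c.mulJ (φ ⊗ₜ[ℂ] ψ) = c.mulJ (ψ ⊗ₜ[ℂ] φ)) (b : A) :
    LinearMap.lTensor A (Dt c ∘ₗ (TensorProduct.mk ℂ A A).flip b)
      (Coalgebra.comul φ) = 0 := by
  have r := Coalgebra.Repr.arbitrary ℂ φ
  have h1 : LinearMap.lTensor A (Dt c ∘ₗ (TensorProduct.mk ℂ A A).flip b)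
      (Coalgebra.comul φ) = Phi c φ ((1 : A) ⊗ₜ[ℂ] b) := by
    simp only [Phi, LinearMap.comp_apply, TensorProduct.mk_apply]
    rw [← r.eq]
    simp only [map_sum, TensorProduct.sum_tmul, ttcL, LinearEquiv.coe_coe,
      TensorProduct.tensorTensorTensorComm_tmul, TensorProduct.map_tmul,
      LinearMap.mul'_apply, LinearMap.lTensor_tmul, LinearMap.flip_apply,
      TensorProduct.mk_apply, mul_one]
    rfl
  have h2 : (1 : A) ⊗ₜ[ℂ] b = galmap b := by rw [gal]; rfl
  rw [h1, h2]
  have rb := Coalgebra.Repr.arbitrary ℂ b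
  have h3 : galmap b = ∑ k ∈ rb.index,
      LinearMap.rTensor A (LinearMap.mul' ℂ A)
        ((TensorProduct.assoc ℂ A A A).symm
          (HopfAlgebra.antipode (R := ℂ) (rb.left k) ⊗ₜ[ℂ] Coalgebra.comul (rb.right k))) := by
    rw [galmap]
    simp only [LinearMap.comp_apply]
    rw [← rb.eq]
    simp [map_sum]
  rw [h3, map_sum]
  refine Finset.sum_eq_zero fun k _ => ?_
  rw [Phi_mul, Phi_comul c φ hφ, LinearMap.map_zero]

end Statement7Aux

/-- If `φ` is central in the twisted algebra `A_J` of a commutative Hopf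
`ℂ`-algebra `A`, then `J(φ ⊗ ψ) = J(ψ ⊗ φ)` for all `ψ`; moreover
`R^J(ψ ⊗ φ) = ε(ψ)ε(φ)` for all `ψ`, so in particular `R^J(ψ ⊗ φ) = 0` whenever
`ε(φ) = 0` or `ε(ψ) = 0`. -/
theorem statement7 (A : Type*) [CommRing A] [HopfAlgebra ℂ A] (c : Hopf2Cocycle A)
    (φ : A) (hφ : ∀ ψ : A, c.mulJ (φ ⊗ₜ[ℂ] ψ) = c.mulJ (ψ ⊗ₜ[ℂ] φ)) :
    (∀ ψ : A, c.J (φ ⊗ₜ[ℂ] ψ) = c.J (ψ ⊗ₜ[ℂ] φ)) ∧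
    (∀ ψ : A, c.RJ (ψ ⊗ₜ[ℂ] φ)
      = Coalgebra.counit (R := ℂ) ψ * Coalgebra.counit (R := ℂ) φ) ∧
    (∀ ψ : A, (Coalgebra.counit (R := ℂ) φ = 0 ∨ Coalgebra.counit (R := ℂ) ψ = 0) →
      c.RJ (ψ ⊗ₜ[ℂ] φ) = 0) := by
  have part1 : ∀ ψ : A, c.J (φ ⊗ₜ[ℂ] ψ) = c.J (ψ ⊗ₜ[ℂ] φ) := fun ψ => by
    rw [← counit_mulJ c φ ψ, ← counit_mulJ c ψ φ, hφ ψ]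
  have part2 : ∀ ψ : A, c.RJ (ψ ⊗ₜ[ℂ] φ)
      = Coalgebra.counit (R := ℂ) ψ * Coalgebra.counit (R := ℂ) φ := by
    intro ψ
    have r := Coalgebra.Repr.arbitrary ℂ φ
    have rψ := Coalgebra.Repr.arbitrary ℂ ψ
    have hRJ : c.RJ (ψ ⊗ₜ[ℂ] φ) = ∑ j ∈ rψ.index, ∑ i ∈ r.index,
        c.Jinv (r.left i ⊗ₜ[ℂ] rψ.left j) * c.J (rψ.right j ⊗ₜ[ℂ] r.right i) := by
      rw [Hopf2Cocycle.RJ, conv_repr _ _ rψ r]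
      simp
    have hswap : ∀ j ∈ rψ.index, ∑ i ∈ r.index,
        c.Jinv (r.left i ⊗ₜ[ℂ] rψ.left j) * c.J (rψ.right j ⊗ₜ[ℂ] r.right i)
        = ∑ i ∈ r.index,
            c.Jinv (r.left i ⊗ₜ[ℂ] rψ.left j) * c.J (r.right i ⊗ₜ[ℂ] rψ.right j) := by
      intro j _
      have hk := key c φ hφ (rψ.right j)
      rw [← r.eq, map_sum] at hk
      have hk2 := congrArg (LinearMap.mul' ℂ ℂ ∘ₗ TensorProduct.map
        (c.Jinv ∘ₗ (TensorProduct.mk ℂ A A).flip (rψ.left j))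
        (Coalgebra.counit (R := ℂ))) hk
      simp only [map_sum, LinearMap.comp_apply, LinearMap.lTensor_tmul,
        TensorProduct.map_tmul, LinearMap.flip_apply, TensorProduct.mk_apply,
        LinearMap.mul'_apply, LinearMap.map_zero] at hk2
      have hd : ∀ i ∈ r.index,
          c.Jinv (r.left i ⊗ₜ[ℂ] rψ.left j) *
            Coalgebra.counit (R := ℂ) (Dt c (r.right i ⊗ₜ[ℂ] rψ.right j))
          = c.Jinv (r.left i ⊗ₜ[ℂ] rψ.left j) * c.J (r.right i ⊗ₜ[ℂ] rψ.right j)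
            - c.Jinv (r.left i ⊗ₜ[ℂ] rψ.left j) * c.J (rψ.right j ⊗ₜ[ℂ] r.right i) := by
        intro i _
        simp only [Dt, LinearMap.comp_apply, LinearMap.sub_apply, LinearMap.flip_apply,
          TensorProduct.mk_apply, LinearEquiv.coe_coe, TensorProduct.comm_tmul, map_sub,
          counit_mulJ]
        ring
      rw [Finset.sum_congr rfl hd, Finset.sum_sub_distrib, sub_eq_zero] at hk2
      exact hk2.symm
    have h2 := conv_repr c.Jinv c.J r rψ
    rw [c.conv_left_inv] at h2
    have h3 : Coalgebra.counit (R := ℂ) (φ ⊗ₜ[ℂ] ψ)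
        = Coalgebra.counit (R := ℂ) φ * Coalgebra.counit (R := ℂ) ψ := by
      rw [TensorProduct.counit_def]
      simp
      exact mul_comm _ _
    rw [hRJ, Finset.sum_congr rfl hswap, Finset.sum_comm, ← h2, h3, mul_comm]
  exact ⟨part1, part2, fun ψ h => by
    rcases h with h | h <;> rw [part2 ψ, h] <;> ring⟩
end Twisting
end
end

section
/- Let Γ be a free abelian group of finite rank and let J be a Hopf 2-cocycle for the group Hopf algebra ℂ[Γ]. Then Γ₀ := {g ∈ Γ : J(g ⊗ h) = J(h ⊗ g) for all h ∈ Γ} is a subgroup of Γ, and the center of the twisted algebra ℂ[Γ]_J equals the ℂ-linear span of Γ₀ (i.e. the group algebra ℂ[Γ₀] sitting inside ℂ[Γ]_J). -/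
open TensorProduct

noncomputable section

namespace Twisting

variable (A : Type*) [CommRing A] [HopfAlgebra ℂ A]

variable {A}

/-- A realization of the commutative Hopf `ℂ`-algebra `A` as the group Hopf algebra
`ℂ[Γ]` of the (multiplicative) abelian group `Γ`: a monoid homomorphism `of : Γ → A`
whose image is a `ℂ`-basis of `A` consisting of grouplike elements, with
`S(of g) = of g⁻¹`. -/
structure GroupLikeBasis (Γ : Type*) [CommGroup Γ] (A : Type*) [CommRing A]
    [HopfAlgebra ℂ A] where
  of : Γ →* A
  basis : Module.Basis Γ ℂ A
  basis_eq : ∀ g : Γ, basis g = of g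
  comul_of : ∀ g : Γ, Coalgebra.comul (R := ℂ) (of g) = of g ⊗ₜ[ℂ] of g
  counit_of : ∀ g : Γ, Coalgebra.counit (R := ℂ) (of g) = (1 : ℂ)
  antipode_of : ∀ g : Γ, HopfAlgebra.antipode (R := ℂ) (of g) = of g⁻¹

/-- `Γ` is a free abelian group of finite rank. -/
def IsFreeAbelianOfFiniteRank (Γ : Type*) [CommGroup Γ] : Prop :=
  ∃ n : ℕ, Nonempty (Γ ≃* Multiplicative (Fin n → ℤ))

section Aux

variable {Γ : Type*} [CommGroup Γ] {A : Type*} [CommRing A] [HopfAlgebra ℂ A]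

lemma conv_apply_grouplike {C : Type*} [AddCommMonoid C] [Module ℂ C] [CoalgebraStruct ℂ C]
    (F G : C →ₗ[ℂ] ℂ) {x : C} (hx : Coalgebra.comul x = x ⊗ₜ[ℂ] x) :
    conv F G x = F x * G x := by
  simp [conv, hx]

lemma comul_tmul_of (gb : GroupLikeBasis Γ A) (g h : Γ) :
    Coalgebra.comul (R := ℂ) (gb.of g ⊗ₜ[ℂ] gb.of h)
      = (gb.of g ⊗ₜ[ℂ] gb.of h) ⊗ₜ[ℂ] (gb.of g ⊗ₜ[ℂ] gb.of h) := by
  simp [TensorProduct.comul_def, gb.comul_of]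

lemma counit_tmul_of (gb : GroupLikeBasis Γ A) (g h : Γ) :
    Coalgebra.counit (R := ℂ) (gb.of g ⊗ₜ[ℂ] gb.of h) = 1 := by
  simp [TensorProduct.counit_def, gb.counit_of]

lemma comul_tmul_of3 (gb : GroupLikeBasis Γ A) (g h k : Γ) :
    Coalgebra.comul (R := ℂ) ((gb.of g ⊗ₜ[ℂ] gb.of h) ⊗ₜ[ℂ] gb.of k)
      = ((gb.of g ⊗ₜ[ℂ] gb.of h) ⊗ₜ[ℂ] gb.of k) ⊗ₜ[ℂ] ((gb.of g ⊗ₜ[ℂ] gb.of h) ⊗ₜ[ℂ] gb.of k) := by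
  simp [TensorProduct.comul_def, gb.comul_of, comul_tmul_of gb g h]

namespace Hopf2Cocycle

lemma J_mul_Jinv (gb : GroupLikeBasis Γ A) (c : Hopf2Cocycle A) (g h : Γ) :
    c.J (gb.of g ⊗ₜ[ℂ] gb.of h) * c.Jinv (gb.of g ⊗ₜ[ℂ] gb.of h) = 1 := by
  have := LinearMap.congr_fun c.conv_right_inv (gb.of g ⊗ₜ[ℂ] gb.of h)
  rwa [conv_apply_grouplike _ _ (comul_tmul_of gb g h), counit_tmul_of gb g h] at this

lemma J_ne_zero (gb : GroupLikeBasis Γ A) (c : Hopf2Cocycle A) (g h : Γ) :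
    c.J (gb.of g ⊗ₜ[ℂ] gb.of h) ≠ 0 :=
  left_ne_zero_of_mul_eq_one (c.J_mul_Jinv gb g h)

lemma J_cocycle_of (gb : GroupLikeBasis Γ A) (c : Hopf2Cocycle A) (g h k : Γ) :
    c.J (gb.of (g * h) ⊗ₜ[ℂ] gb.of k) * c.J (gb.of g ⊗ₜ[ℂ] gb.of h)
      = c.J (gb.of g ⊗ₜ[ℂ] gb.of (h * k)) * c.J (gb.of h ⊗ₜ[ℂ] gb.of k) := by
  have := LinearMap.congr_fun c.cocycle ((gb.of g ⊗ₜ[ℂ] gb.of h) ⊗ₜ[ℂ] gb.of k)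
  rw [conv_apply_grouplike _ _ (comul_tmul_of3 gb g h k),
    conv_apply_grouplike _ _ (comul_tmul_of3 gb g h k)] at this
  simpa [LinearMap.mul'_apply, ← map_mul, gb.counit_of, counit_tmul_of] using this

lemma J_one_left (gb : GroupLikeBasis Γ A) (c : Hopf2Cocycle A) (g : Γ) :
    c.J (gb.of 1 ⊗ₜ[ℂ] gb.of g) = 1 := by
  rw [map_one]
  rw [c.norm_left, gb.counit_of]

lemma J_one_right (gb : GroupLikeBasis Γ A) (c : Hopf2Cocycle A) (g : Γ) :
    c.J (gb.of g ⊗ₜ[ℂ] gb.of 1) = 1 := by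
  rw [map_one]
  rw [c.norm_right, gb.counit_of]

/-- The bicharacter relation. -/
lemma bichar (gb : GroupLikeBasis Γ A) (c : Hopf2Cocycle A) (g h k : Γ) :
    c.J (gb.of (g * h) ⊗ₜ[ℂ] gb.of k) * (c.J (gb.of k ⊗ₜ[ℂ] gb.of g) * c.J (gb.of k ⊗ₜ[ℂ] gb.of h))
      = c.J (gb.of k ⊗ₜ[ℂ] gb.of (g * h)) *
        (c.J (gb.of g ⊗ₜ[ℂ] gb.of k) * c.J (gb.of h ⊗ₜ[ℂ] gb.of k)) := by
  have e1 := c.J_cocycle_of gb g h k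
  have e2 := c.J_cocycle_of gb g k h
  have e3 := c.J_cocycle_of gb k g h
  rw [mul_comm k h] at e2
  rw [mul_comm k g] at e3
  refine mul_right_cancel₀ (c.J_ne_zero gb g h) ?_
  linear_combination (c.J (gb.of k ⊗ₜ[ℂ] gb.of g) * c.J (gb.of k ⊗ₜ[ℂ] gb.of h)) * e1
    - (c.J (gb.of h ⊗ₜ[ℂ] gb.of k) * c.J (gb.of k ⊗ₜ[ℂ] gb.of g)) * e2
    + (c.J (gb.of g ⊗ₜ[ℂ] gb.of k) * c.J (gb.of h ⊗ₜ[ℂ] gb.of k)) * e3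

lemma mulJ_of (gb : GroupLikeBasis Γ A) (c : Hopf2Cocycle A) (g h : Γ) :
    c.mulJ (gb.of g ⊗ₜ[ℂ] gb.of h) = c.J (gb.of g ⊗ₜ[ℂ] gb.of h) • gb.of (g * h) := by
  simp [mulJ, TensorProduct.comul_def, gb.comul_of,
    TensorProduct.tensorTensorTensorComm_tmul, LinearMap.mul'_apply, ← map_mul]

end Hopf2Cocycle

end Aux

/-- For a free abelian group `Γ` of finite rank and a Hopf 2-cocycle `J`
for `ℂ[Γ]`, the set `Γ₀ = {g | J(g ⊗ h) = J(h ⊗ g) ∀ h}` is a subgroup of `Γ`, and the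
center of the twisted algebra `ℂ[Γ]_J` is the `ℂ`-linear span of `Γ₀`. -/
theorem statement11 (Γ : Type*) [CommGroup Γ] (hfree : IsFreeAbelianOfFiniteRank Γ)
    (A : Type*) [CommRing A] [HopfAlgebra ℂ A] (gb : GroupLikeBasis Γ A)
    (c : Hopf2Cocycle A) :
    ∃ Γ₀ : Subgroup Γ,
      (∀ g : Γ, g ∈ Γ₀ ↔
        ∀ h : Γ, c.J (gb.of g ⊗ₜ[ℂ] gb.of h) = c.J (gb.of h ⊗ₜ[ℂ] gb.of g)) ∧
      {a : A | ∀ b : A, c.mulJ (a ⊗ₜ[ℂ] b) = c.mulJ (b ⊗ₜ[ℂ] a)}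
        = (Submodule.span ℂ (⇑gb.of '' (Γ₀ : Set Γ)) : Submodule ℂ A) := by
  classical
  have hne := c.J_ne_zero gb
  have B := c.bichar gb
  let S : Subgroup Γ :=
  { carrier := {g | ∀ h, c.J (gb.of g ⊗ₜ[ℂ] gb.of h) = c.J (gb.of h ⊗ₜ[ℂ] gb.of g)}
    one_mem' := fun {h} => by rw [c.J_one_left gb, c.J_one_right gb]
    mul_mem' := by
      intro g h hg hh k
      have b1 := B g h k
      rw [hg k, hh k] at b1
      exact mul_right_cancel₀ (mul_ne_zero (hne k g) (hne k h)) b1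
    inv_mem' := by
      intro g hg k
      have b1 := B g⁻¹ g k
      rw [inv_mul_cancel, c.J_one_left gb, c.J_one_right gb, one_mul, one_mul, hg k] at b1
      exact (mul_right_cancel₀ (hne k g) b1).symm }
  have hmem : ∀ g : Γ, g ∈ S ↔
      ∀ h, c.J (gb.of g ⊗ₜ[ℂ] gb.of h) = c.J (gb.of h ⊗ₜ[ℂ] gb.of g) := fun g => Iff.rfl
  have hrepr : ∀ g : Γ, gb.basis.repr (gb.of g) = Finsupp.single g 1 := fun g => by
    rw [← gb.basis_eq]; exact gb.basis.repr_self g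
  have key1 : ∀ (a : A) (g h : Γ),
      gb.basis.repr (c.mulJ (a ⊗ₜ[ℂ] gb.of h)) (g * h)
        = c.J (gb.of g ⊗ₜ[ℂ] gb.of h) * gb.basis.repr a g := by
    intro a g h
    have heq : (Finsupp.lapply (g * h) : (Γ →₀ ℂ) →ₗ[ℂ] ℂ) ∘ₗ
          (gb.basis.repr.toLinearMap ∘ₗ (c.mulJ ∘ₗ (TensorProduct.mk ℂ A A).flip (gb.of h)))
        = c.J (gb.of g ⊗ₜ[ℂ] gb.of h) •
          ((Finsupp.lapply g : (Γ →₀ ℂ) →ₗ[ℂ] ℂ) ∘ₗ gb.basis.repr.toLinearMap) := by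
      apply gb.basis.ext
      intro g'
      simp only [LinearMap.comp_apply, LinearMap.flip_apply, TensorProduct.mk_apply,
        LinearMap.smul_apply, LinearEquiv.coe_toLinearMap, gb.basis_eq, Finsupp.lapply_apply]
      rw [c.mulJ_of gb g' h, map_smul, hrepr, hrepr]
      by_cases hgg : g' = g
      · subst hgg; simp
      · rw [Finsupp.smul_apply, Finsupp.single_apply, Finsupp.single_apply,
          if_neg (fun e => hgg (mul_right_cancel e)), if_neg hgg]
        simp
    have := LinearMap.congr_fun heq a
    simpa using this
  have key2 : ∀ (a : A) (g h : Γ),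
      gb.basis.repr (c.mulJ (gb.of h ⊗ₜ[ℂ] a)) (g * h)
        = c.J (gb.of h ⊗ₜ[ℂ] gb.of g) * gb.basis.repr a g := by
    intro a g h
    have heq : (Finsupp.lapply (g * h) : (Γ →₀ ℂ) →ₗ[ℂ] ℂ) ∘ₗ
          (gb.basis.repr.toLinearMap ∘ₗ (c.mulJ ∘ₗ TensorProduct.mk ℂ A A (gb.of h)))
        = c.J (gb.of h ⊗ₜ[ℂ] gb.of g) •
          ((Finsupp.lapply g : (Γ →₀ ℂ) →ₗ[ℂ] ℂ) ∘ₗ gb.basis.repr.toLinearMap) := by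
      apply gb.basis.ext
      intro g'
      simp only [LinearMap.comp_apply, TensorProduct.mk_apply,
        LinearMap.smul_apply, LinearEquiv.coe_toLinearMap, gb.basis_eq, Finsupp.lapply_apply]
      rw [c.mulJ_of gb h g', map_smul, hrepr, hrepr]
      by_cases hgg : g' = g
      · subst hgg; simp [mul_comm h g']
      · rw [Finsupp.smul_apply, Finsupp.single_apply, Finsupp.single_apply,
          if_neg (fun e => hgg (by
            have : h * g' = g * h := e
            rw [mul_comm h g'] at this
            exact mul_right_cancel this)), if_neg hgg]
        simp
    have := LinearMap.congr_fun heq a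
    simpa using this
  refine ⟨S, hmem, ?_⟩
  ext a
  simp only [Set.mem_setOf_eq, SetLike.mem_coe]
  constructor
  · intro ha
    have himg : (⇑gb.of '' (S : Set Γ)) = ⇑gb.basis '' (S : Set Γ) :=
      Set.image_congr fun g _ => (gb.basis_eq g).symm
    rw [himg, Module.Basis.mem_span_image]
    intro g hg
    have hg' : gb.basis.repr a g ≠ 0 := Finsupp.mem_support_iff.mp hg
    refine (hmem g).mpr fun h => ?_
    have e := congrArg (fun x => gb.basis.repr x (g * h)) (ha (gb.of h))
    rw [key1 a g h, key2 a g h] at e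
    exact mul_right_cancel₀ hg' e
  · intro ha
    have key : ∀ g ∈ S, ∀ b : A,
        c.mulJ (gb.of g ⊗ₜ[ℂ] b) = c.mulJ (b ⊗ₜ[ℂ] gb.of g) := by
      intro g hg
      have heq : c.mulJ ∘ₗ TensorProduct.mk ℂ A A (gb.of g)
          = c.mulJ ∘ₗ (TensorProduct.mk ℂ A A).flip (gb.of g) := by
        apply gb.basis.ext
        intro h
        simp only [LinearMap.comp_apply, TensorProduct.mk_apply, LinearMap.flip_apply,
          gb.basis_eq]
        rw [c.mulJ_of gb g h, c.mulJ_of gb h g, (hmem g).mp hg h, mul_comm g h]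
      exact fun b => LinearMap.congr_fun heq b
    refine Submodule.span_induction
      (p := fun x _ => ∀ b : A, c.mulJ (x ⊗ₜ[ℂ] b) = c.mulJ (b ⊗ₜ[ℂ] x))
      ?_ ?_ ?_ ?_ ha
    · rintro x ⟨g, hgS, rfl⟩
      exact key g hgS
    · intro b
      simp
    · intro x y _ _ hx hy b
      rw [TensorProduct.add_tmul, TensorProduct.tmul_add, map_add, map_add, hx b, hy b]
    · intro r x _ hx b
      rw [show (r • x) ⊗ₜ[ℂ] b = r • (x ⊗ₜ[ℂ] b) from (TensorProduct.smul_tmul' r x b).symm,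
        show b ⊗ₜ[ℂ] (r • x) = r • (b ⊗ₜ[ℂ] x) from TensorProduct.tmul_smul r b x,
        map_smul, map_smul, hx b]

end Twisting
end
end
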